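/- Let P₁, …, Pₙ be an affinely independent set of lattice simplices in ℤ^d with each L_{Pⱼ} containing the origin, and let m be a nonzero element of the finite group G_P := (ℤ^d ∩ (L_P ⊗ ℝ))/L_P. Then there exists a unique minimal (in the coordinatewise product order) tuple (c₁,…,cₙ) of nonnegative integers such that the Minkowski sum ∑ⱼ cⱼPⱼ contains a representative of m; moreover this tuple satisfies 0 ≤ cⱼ ≤ dim Pⱼ for all j, and the representative of m in ∑ⱼ cⱼPⱼ for the minimal tuple is unique. -/

import Mathlib

open Pointwise

noncomputable section

/-- Coordinatewise cast `ℤ → ℝ`, as an additive group homomorphism. -/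
def castH {ι : Type*} : (ι → ℤ) →+ (ι → ℝ) where
  toFun z := fun i => (z i : ℝ)
  map_zero' := by funext i; simp
  map_add' x y := by funext i; simp

/-- The affine lattice spanned by a finite set of points:
all integer affine combinations of the points. -/
def affLat {M : Type*} [AddCommGroup M] (S : Finset M) : Set M :=
  {z | ∃ a : M → ℤ, (∑ x ∈ S, a x) = 1 ∧ (∑ x ∈ S, a x • x) = z}

@[simp] lemma castH_apply {ι : Type*} (z : ι → ℤ) (i : ι) : castH z i = (z i : ℝ) := rfl

lemma castH_inj {ι : Type*} : Function.Injective (castH (ι := ι)) := by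
  intro a b h
  funext i
  have h2 : ((a i : ℝ)) = ((b i : ℝ)) := congrFun h i
  exact_mod_cast h2

lemma castH_zsmul {ι : Type*} (k : ℤ) (w : ι → ℤ) :
    castH (k • w) = (k : ℝ) • castH w := by
  rw [map_zsmul, Int.cast_smul_eq_zsmul]

lemma sum_smul_castH_split {d : ℕ} (S : Finset (Fin d → ℤ)) (v₀ : Fin d → ℤ)
    (lam : (Fin d → ℤ) → ℝ) :
    ∑ v ∈ S, lam v • castH v
      = (∑ v ∈ S, lam v) • castH v₀ + ∑ v ∈ S.erase v₀, lam v • (castH v - castH v₀) := by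
  classical
  rw [Finset.sum_erase S (f := fun v => lam v • (castH v - castH v₀)) (a := v₀) (by simp),
    Finset.sum_smul, ← Finset.sum_add_distrib]
  exact Finset.sum_congr rfl fun v _ => by rw [smul_sub]; abel

lemma mem_nsmul_hull_iff {d : ℕ} (S : Finset (Fin d → ℤ)) (hS : S.Nonempty) (c : ℕ)
    (p : Fin d → ℝ) :
    p ∈ (c : ℝ) • (convexHull ℝ (castH '' (S : Set (Fin d → ℤ)))) ↔
      ∃ lam : (Fin d → ℤ) → ℝ, (∀ v ∈ S, 0 ≤ lam v) ∧ (∑ v ∈ S, lam v) = c ∧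
        (∑ v ∈ S, lam v • castH v) = p := by
  classical
  rcases Nat.eq_zero_or_pos c with hc | hc
  · subst hc
    have hne : (convexHull ℝ (castH '' (S : Set (Fin d → ℤ)))).Nonempty :=
      ⟨castH hS.choose, subset_convexHull ℝ _ ⟨hS.choose, by simpa using hS.choose_spec, rfl⟩⟩
    rw [Nat.cast_zero, Set.zero_smul_set hne]
    constructor
    · intro hp
      have hp0 : p = 0 := hp
      refine ⟨0, by simp, by simp, by simp [hp0]⟩
    · rintro ⟨lam, h0, h1, h2⟩
      have hz : ∀ v ∈ S, lam v = 0 :=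
        (Finset.sum_eq_zero_iff_of_nonneg h0).mp (by simpa using h1)
      have : p = 0 := by
        rw [← h2, Finset.sum_congr rfl fun v hv => by rw [hz v hv, zero_smul]]
        simp
      simp [this]
  · have hcR : (0:ℝ) < c := by exact_mod_cast hc
    constructor
    · intro hp
      obtain ⟨q, hq, rfl⟩ := hp
      rw [show (castH '' (S : Set (Fin d → ℤ)))
            = ((S.image (fun v => castH v) : Finset (Fin d → ℝ)) : Set (Fin d → ℝ)) by
          simp [Finset.coe_image], Finset.convexHull_eq] at hq
      obtain ⟨w, hw0, hw1, hwq⟩ := hq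
      have hinj : ∀ v ∈ S, ∀ v' ∈ S, castH v = castH v' → v = v' :=
        fun v _ v' _ h => castH_inj h
      refine ⟨fun v => c * w (castH v),
        fun v hv => mul_nonneg hcR.le (hw0 _ (Finset.mem_image_of_mem _ hv)), ?_, ?_⟩
      · rw [← Finset.mul_sum, ← Finset.sum_image (g := fun v => castH v) (f := w) hinj,
          hw1, mul_one]
      · have hcm : (S.image (fun v => castH v)).centerMass w id
            = ∑ y ∈ S.image (fun v => castH v), w y • y := by
          rw [Finset.centerMass_eq_of_sum_1 _ _ hw1]
          simp
        calc ∑ v ∈ S, (c * w (castH v)) • castH v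
            = (c:ℝ) • ∑ v ∈ S, w (castH v) • castH v := by
              rw [Finset.smul_sum]
              exact Finset.sum_congr rfl fun v _ => by rw [smul_smul]
          _ = (c:ℝ) • q := by
              rw [← Finset.sum_image (g := fun v => castH v)
                (f := fun y => w y • y) hinj, ← hcm, hwq]
    · rintro ⟨lam, h0, h1, h2⟩
      have hmem : S.centerMass lam (fun v => castH v)
          ∈ convexHull ℝ (castH '' (S : Set (Fin d → ℤ))) :=
        S.centerMass_mem_convexHull (fun v hv => h0 v hv) (by rw [h1]; exact hcR)
          (fun v hv => ⟨v, by simpa using hv, rfl⟩)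
      refine ⟨S.centerMass lam (fun v => castH v), hmem, ?_⟩
      show (c:ℝ) • ((∑ v ∈ S, lam v)⁻¹ • ∑ v ∈ S, lam v • castH v) = p
      rw [h1, h2, smul_smul, mul_inv_cancel₀ (ne_of_gt hcR), one_smul]
theorem stmt_3 (d n : ℕ) (V : Fin n → Finset (Fin d → ℤ))
    (hV : ∀ j, (V j).Nonempty)
    (hsimp : ∀ j, AffineIndependent ℝ (fun x : (V j : Set (Fin d → ℤ)) => castH x.1))
    (hindep : iSupIndep (fun j => Submodule.span ℝ
      (castH '' {z | ∃ a ∈ V j, ∃ b ∈ V j, z = a - b})))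
    (h0 : ∀ j, (0 : Fin d → ℤ) ∈ affLat (V j))
    (LP : AddSubgroup (Fin d → ℤ))
    (hLP : LP = AddSubgroup.closure (⋃ j, (V j : Set (Fin d → ℤ))))
    (x : Fin d → ℤ)
    (hx : castH x ∈ Submodule.span ℝ (castH '' (LP : Set (Fin d → ℤ))))
    (hxn : x ∉ LP) :
    ∃ c : Fin n → ℕ,
      -- `∑ⱼ cⱼPⱼ` contains a representative of `m`
      (∃ z : Fin d → ℤ, z - x ∈ LP ∧
        castH z ∈ ∑ j, (c j : ℝ) • (convexHull ℝ (castH '' (V j : Set (Fin d → ℤ))))) ∧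
      -- minimality in the coordinatewise product order
      (∀ c' : Fin n → ℕ,
        (∃ z : Fin d → ℤ, z - x ∈ LP ∧
          castH z ∈ ∑ j, (c' j : ℝ) • (convexHull ℝ (castH '' (V j : Set (Fin d → ℤ))))) →
        ∀ j, c j ≤ c' j) ∧
      -- `cⱼ ≤ dim Pⱼ`
      (∀ j, c j ≤ (V j).card - 1) ∧
      -- uniqueness of the representative for the minimal tuple
      (∃! z : Fin d → ℤ, z - x ∈ LP ∧
        castH z ∈ ∑ j, (c j : ℝ) • (convexHull ℝ (castH '' (V j : Set (Fin d → ℤ))))) := by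
  classical
  choose v0 hv0 using hV
  -- index type for the global "basis"
  let e : (Σ j : Fin n, ↥((V j).erase (v0 j))) → (Fin d → ℝ) :=
    fun i => castH i.2.1 - castH (v0 i.1)
  have hmemV : ∀ {j} (u : ↥((V j).erase (v0 j))), u.1 ∈ V j :=
    fun {j} u => (Finset.mem_erase.mp u.2).2
  have hneV : ∀ {j} (u : ↥((V j).erase (v0 j))), u.1 ≠ v0 j :=
    fun {j} u => (Finset.mem_erase.mp u.2).1
  -- integral coordinates of v0 j
  have hmu : ∀ j, ∃ μ : ↥((V j).erase (v0 j)) → ℤ,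
      castH (v0 j) = ∑ u, (μ u : ℝ) • e ⟨j, u⟩ := by
    intro j
    obtain ⟨a, ha1, ha0⟩ := h0 j
    refine ⟨fun u => -(a u.1), ?_⟩
    have hz : (∑ v ∈ V j, (-(a v)) • (v - v0 j)) = v0 j := by
      have h1 : ∀ v : Fin d → ℤ, (-(a v)) • (v - v0 j) = a v • v0 j - a v • v := by
        intro v; rw [neg_smul, smul_sub]; abel
      rw [Finset.sum_congr rfl fun v _ => h1 v, Finset.sum_sub_distrib, ← Finset.sum_smul,
        ha1, ha0, one_smul, sub_zero]
    calc castH (v0 j) = castH (∑ v ∈ V j, (-(a v)) • (v - v0 j)) := by rw [hz]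
      _ = ∑ v ∈ V j, ((-(a v) : ℤ) : ℝ) • (castH v - castH (v0 j)) := by
          rw [map_sum]
          exact Finset.sum_congr rfl fun v _ => by rw [castH_zsmul, map_sub]
      _ = ∑ v ∈ (V j).erase (v0 j), ((-(a v) : ℤ) : ℝ) • (castH v - castH (v0 j)) := by
          rw [Finset.sum_erase _ (by simp)]
      _ = ∑ u : ↥((V j).erase (v0 j)), ((-(a u.1) : ℤ) : ℝ) • e ⟨j, u⟩ :=
          (Finset.sum_coe_sort ((V j).erase (v0 j))
            (fun v => ((-(a v) : ℤ) : ℝ) • (castH v - castH (v0 j)))).symm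
  choose μ hμ using hmu
  -- membership of generators in the span of e
  have hv0span : ∀ j, castH (v0 j) ∈ Submodule.span ℝ (Set.range e) := by
    intro j
    rw [hμ j]
    exact Submodule.sum_mem _ fun u _ =>
      Submodule.smul_mem _ _ (Submodule.subset_span ⟨⟨j, u⟩, rfl⟩)
  have hgen : ∀ j, ∀ v ∈ V j, castH v ∈ Submodule.span ℝ (Set.range e) := by
    intro j v hv
    by_cases hvv : v = v0 j
    · rw [hvv]; exact hv0span j
    · have hee : castH v = castH (v0 j) + e ⟨j, ⟨v, Finset.mem_erase.mpr ⟨hvv, hv⟩⟩⟩ := by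
        show castH v = castH (v0 j) + (castH v - castH (v0 j)); abel
      rw [hee]
      exact Submodule.add_mem _ (hv0span j) (Submodule.subset_span ⟨_, rfl⟩)
  -- span identification
  have Wspan : Submodule.span ℝ (castH '' (LP : Set (Fin d → ℤ)))
      = Submodule.span ℝ (Set.range e) := by
    apply le_antisymm
    · rw [Submodule.span_le]
      rintro w ⟨ℓ, hℓ, rfl⟩
      rw [hLP] at hℓ
      change ℓ ∈ AddSubgroup.closure _ at hℓ
      induction hℓ using AddSubgroup.closure_induction with
      | mem v hvmem =>
          obtain ⟨j, hvj⟩ := Set.mem_iUnion.mp hvmem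
          exact hgen j v (Finset.mem_coe.mp hvj)
      | zero => rw [map_zero]; exact Submodule.zero_mem _
      | add a b ha hb iha ihb => rw [map_add]; exact Submodule.add_mem _ iha ihb
      | neg a ha iha => rw [map_neg]; exact Submodule.neg_mem _ iha
    · rw [Submodule.span_le]
      rintro w ⟨i, rfl⟩
      have h1 : i.2.1 - v0 i.1 ∈ LP := by
        rw [hLP]
        exact sub_mem
          (AddSubgroup.subset_closure (Set.mem_iUnion.mpr ⟨i.1, Finset.mem_coe.mpr (hmemV i.2)⟩))
          (AddSubgroup.subset_closure (Set.mem_iUnion.mpr ⟨i.1, Finset.mem_coe.mpr (hv0 i.1)⟩))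
      have h2 : e i = castH (i.2.1 - v0 i.1) := by rw [map_sub]
      rw [SetLike.mem_coe, h2]
      exact Submodule.subset_span ⟨_, h1, rfl⟩
  -- linear independence of the global family
  have libl : ∀ j, LinearIndependent ℝ (fun u : ↥((V j).erase (v0 j)) => e ⟨j, u⟩) := by
    intro j
    have h1 := (affineIndependent_iff_linearIndependent_vsub ℝ
      (fun x : (V j : Set (Fin d → ℤ)) => castH x.1)
      ⟨v0 j, Finset.mem_coe.mpr (hv0 j)⟩).mp (hsimp j)
    have φinj : Function.Injective (fun u : ↥((V j).erase (v0 j)) =>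
        (⟨⟨u.1, Finset.mem_coe.mpr (hmemV u)⟩, fun hh => hneV u (congrArg Subtype.val hh)⟩ :
          {y : (V j : Set (Fin d → ℤ)) // y ≠ ⟨v0 j, Finset.mem_coe.mpr (hv0 j)⟩})) := by
      intro u u' huu
      exact Subtype.ext (congrArg (fun y => y.1.1) huu)
    have h2 := h1.comp _ φinj
    exact h2
  have li : LinearIndependent ℝ e := by
    rw [Fintype.linearIndependent_iff]
    intro g hg
    set Sb : Fin n → (Fin d → ℝ) := fun j' => ∑ u, g ⟨j', u⟩ • e ⟨j', u⟩ with hSbdef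
    have hzero : ∑ j', Sb j' = 0 := by
      rw [hSbdef, ← Finset.sum_sigma Finset.univ (fun _ => Finset.univ) (fun i => g i • e i)]
      exact hg
    have hblk0 : ∀ j, Sb j = 0 := by
      intro j
      have hSbW : ∀ j', Sb j' ∈ Submodule.span ℝ
          (castH '' {z | ∃ a ∈ V j', ∃ b ∈ V j', z = a - b}) := by
        intro j'
        refine Submodule.sum_mem _ fun u _ =>
          Submodule.smul_mem _ _ (Submodule.subset_span ?_)
        exact ⟨u.1 - v0 j', ⟨u.1, hmemV u, v0 j', hv0 j', rfl⟩, by rw [map_sub]⟩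
      have hrest : ∑ j' ∈ Finset.univ.erase j, Sb j' ∈
          ⨆ (j' : Fin n) (_ : j' ≠ j), (Submodule.span ℝ
            (castH '' {z | ∃ a ∈ V j', ∃ b ∈ V j', z = a - b})) :=
        Submodule.sum_mem _ fun j' hj' =>
          Submodule.mem_iSup_of_mem j'
            (Submodule.mem_iSup_of_mem (Finset.mem_erase.mp hj').1 (hSbW j'))
      have heq : Sb j = -∑ j' ∈ Finset.univ.erase j, Sb j' := by
        refine eq_neg_of_add_eq_zero_left ?_
        rw [Finset.add_sum_erase _ Sb (Finset.mem_univ j), hzero]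
      exact Submodule.disjoint_def.mp (hindep j) (Sb j) (hSbW j)
        (heq ▸ Submodule.neg_mem _ hrest)
    intro i
    obtain ⟨j, u⟩ := i
    exact Fintype.linearIndependent_iff.mp (libl j) (fun u => g ⟨j, u⟩) (hblk0 j) u
  have uniq : ∀ a b : (Σ j : Fin n, ↥((V j).erase (v0 j))) → ℝ,
      ∑ i, a i • e i = ∑ i, b i • e i → a = b := by
    intro a b h
    have h2 := Fintype.linearIndependent_iff.mp li (a - b) ?_
    · funext i
      have := h2 i
      simp only [Pi.sub_apply] at this
      linarith
    · simp only [Pi.sub_apply, sub_smul, Finset.sum_sub_distrib, h, sub_self]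
  -- coordinates of x
  have hxe : castH x ∈ Submodule.span ℝ (Set.range e) := Wspan ▸ hx
  obtain ⟨t, ht⟩ := (Submodule.mem_span_range_iff_exists_fun ℝ).mp hxe
  -- integral coordinates for lattice points
  have hInt : ∀ ℓ ∈ LP, ∃ k : (Σ j : Fin n, ↥((V j).erase (v0 j))) → ℤ,
      castH ℓ = ∑ i, (k i : ℝ) • e i := by
    have hblk : ∀ (j : Fin n) (b : ↥((V j).erase (v0 j)) → ℤ) (w : Fin d → ℝ),
        w = ∑ u, (b u : ℝ) • e ⟨j, u⟩ →
        ∃ k : (Σ j : Fin n, ↥((V j).erase (v0 j))) → ℤ, w = ∑ i, (k i : ℝ) • e i := by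
      intro j b w hw
      refine ⟨fun i => ∑ u, if i = ⟨j, u⟩ then b u else 0, ?_⟩
      rw [hw]
      symm
      calc ∑ i, ((∑ u, if i = ⟨j, u⟩ then b u else 0 : ℤ) : ℝ) • e i
          = ∑ i, ∑ u, ((if i = ⟨j, u⟩ then b u else 0 : ℤ) : ℝ) • e i := by
            refine Finset.sum_congr rfl fun i _ => ?_
            rw [Int.cast_sum, Finset.sum_smul]
        _ = ∑ u, ∑ i, ((if i = ⟨j, u⟩ then b u else 0 : ℤ) : ℝ) • e i := Finset.sum_comm
        _ = ∑ u, (b u : ℝ) • e ⟨j, u⟩ := by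
            refine Finset.sum_congr rfl fun u _ => ?_
            have hstep : ∀ i : (Σ j : Fin n, ↥((V j).erase (v0 j))),
                ((if i = ⟨j, u⟩ then b u else 0 : ℤ) : ℝ) • e i
                  = if i = (⟨j, u⟩ : Σ j : Fin n, ↥((V j).erase (v0 j))) then
                      (fun i' => (b u : ℝ) • e i') i else 0 := by
              intro i; split <;> simp
            rw [Finset.sum_congr rfl fun i _ => hstep i,
              Finset.sum_ite_eq' Finset.univ _ (fun i' => (b u : ℝ) • e i'),
              if_pos (Finset.mem_univ _)]
    have hintv0 : ∀ j, ∃ k : (Σ j : Fin n, ↥((V j).erase (v0 j))) → ℤ,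
        castH (v0 j) = ∑ i, (k i : ℝ) • e i := fun j => hblk j (μ j) _ (hμ j)
    have hinte : ∀ (j : Fin n) (u0 : ↥((V j).erase (v0 j))),
        ∃ k : (Σ j : Fin n, ↥((V j).erase (v0 j))) → ℤ,
          e ⟨j, u0⟩ = ∑ i, (k i : ℝ) • e i := by
      intro j u0
      refine hblk j (fun u => if u = u0 then 1 else 0) _ ?_
      have hstep : ∀ u : ↥((V j).erase (v0 j)),
          ((if u = u0 then 1 else 0 : ℤ) : ℝ) • e ⟨j, u⟩
            = if u = u0 then (fun u' => e ⟨j, u'⟩) u else 0 := by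
        intro u; split <;> simp
      rw [Finset.sum_congr rfl fun u _ => hstep u,
        Finset.sum_ite_eq' Finset.univ _ (fun u' => e ⟨j, u'⟩),
        if_pos (Finset.mem_univ _)]
    have hadd : ∀ w1 w2 : Fin d → ℝ,
        (∃ k : (Σ j : Fin n, ↥((V j).erase (v0 j))) → ℤ, w1 = ∑ i, (k i : ℝ) • e i) →
        (∃ k : (Σ j : Fin n, ↥((V j).erase (v0 j))) → ℤ, w2 = ∑ i, (k i : ℝ) • e i) →
        ∃ k : (Σ j : Fin n, ↥((V j).erase (v0 j))) → ℤ, w1 + w2 = ∑ i, (k i : ℝ) • e i := by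
      rintro w1 w2 ⟨k1, hk1⟩ ⟨k2, hk2⟩
      refine ⟨k1 + k2, ?_⟩
      rw [hk1, hk2, ← Finset.sum_add_distrib]
      refine Finset.sum_congr rfl fun i _ => ?_
      rw [Pi.add_apply, Int.cast_add, add_smul]
    intro ℓ hℓ
    rw [hLP] at hℓ
    induction hℓ using AddSubgroup.closure_induction with
    | mem v hvmem =>
        obtain ⟨j, hvj⟩ := Set.mem_iUnion.mp hvmem
        have hvj' : v ∈ V j := Finset.mem_coe.mp hvj
        by_cases hvv : v = v0 j
        · rw [hvv]; exact hintv0 j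
        · have hee : castH v = castH (v0 j) + e ⟨j, ⟨v, Finset.mem_erase.mpr ⟨hvv, hvj'⟩⟩⟩ := by
            show castH v = castH (v0 j) + (castH v - castH (v0 j)); abel
          rw [hee]
          exact hadd _ _ (hintv0 j) (hinte j _)
    | zero => exact ⟨0, by simp⟩
    | add a b ha hb iha ihb => rw [map_add]; exact hadd _ _ iha ihb
    | neg a ha iha =>
        obtain ⟨k, hk⟩ := iha
        refine ⟨-k, ?_⟩
        rw [map_neg, hk, ← Finset.sum_neg_distrib]
        refine Finset.sum_congr rfl fun i _ => ?_
        rw [Pi.neg_apply, Int.cast_neg, neg_smul]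
  -- the fractional parts and the candidate tuple
  set f : ∀ j : Fin n, ↥((V j).erase (v0 j)) → ℝ :=
    fun j u => Int.fract (t ⟨j, u⟩) with hf
  set c : Fin n → ℕ := fun j => ⌈∑ u, f j u⌉₊ with hc
  -- the key analysis of representatives
  have keyF : ∀ (c' : Fin n → ℕ) (z : Fin d → ℤ), z - x ∈ LP →
      castH z ∈ ∑ j, (c' j : ℝ) • (convexHull ℝ (castH '' (V j : Set (Fin d → ℤ)))) →
      ∃ lam : ∀ j : Fin n, ↥((V j).erase (v0 j)) → ℝ,
        (∀ j u, 0 ≤ lam j u) ∧ (∀ j, ∑ u, lam j u ≤ (c' j : ℝ)) ∧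
        (∀ j u, ∃ k : ℤ, lam j u = t ⟨j, u⟩ + k) ∧
        castH z = ∑ j, ((c' j : ℝ) • castH (v0 j) + ∑ u, lam j u • e ⟨j, u⟩) := by
    intro c' z hzLP hzmem
    obtain ⟨g, hg, hgsum⟩ := (Set.mem_fintype_sum _ _).mp hzmem
    have hlamS : ∀ j, ∃ lamS : (Fin d → ℤ) → ℝ, (∀ v ∈ V j, 0 ≤ lamS v) ∧
        (∑ v ∈ V j, lamS v) = ((c' j : ℕ) : ℝ) ∧ (∑ v ∈ V j, lamS v • castH v) = g j := by
      intro j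
      exact (mem_nsmul_hull_iff (V j) ⟨v0 j, hv0 j⟩ (c' j) (g j)).mp (hg j)
    choose lamS hpos hsum hval using hlamS
    have hdec : castH z = ∑ j, ((c' j : ℝ) • castH (v0 j)
        + ∑ u, lamS j u.1 • e ⟨j, u⟩) := by
      rw [← hgsum]
      refine Finset.sum_congr rfl fun j _ => ?_
      rw [← hval j, sum_smul_castH_split (V j) (v0 j) (lamS j), hsum j]
      congr 1
      exact (Finset.sum_coe_sort ((V j).erase (v0 j))
        (fun v => lamS j v • (castH v - castH (v0 j)))).symm
    have hcong : ∀ j u, ∃ k : ℤ, lamS j u.1 = t ⟨j, u⟩ + k := by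
      obtain ⟨k, hk⟩ := hInt (z - x) hzLP
      have hzk : castH z = ∑ i, (t i + (k i : ℝ)) • e i := by
        have h1 : castH (z - x) = castH z - castH x := map_sub _ _ _
        have h2 : castH z = castH x + castH (z - x) := by rw [h1]; abel
        rw [h2, ← ht, hk, ← Finset.sum_add_distrib]
        exact Finset.sum_congr rfl fun i _ => by rw [add_smul]
      have hzA : castH z = ∑ i, ((c' i.1 : ℝ) * (μ i.1 i.2 : ℝ) + lamS i.1 i.2.1) • e i := by
        rw [hdec]
        rw [← Finset.univ_sigma_univ, Finset.sum_sigma]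
        refine Finset.sum_congr rfl fun j _ => ?_
        rw [hμ j, Finset.smul_sum, ← Finset.sum_add_distrib]
        refine Finset.sum_congr rfl fun u _ => ?_
        rw [smul_smul, add_smul]
      have heq := uniq _ _ (hzk.symm.trans hzA)
      intro j u
      refine ⟨k ⟨j, u⟩ - (c' j : ℤ) * μ j u, ?_⟩
      have := congrFun heq ⟨j, u⟩
      push_cast
      push_cast at this
      linarith
    refine ⟨fun j u => lamS j u.1, fun j u => hpos j u.1 (hmemV u), ?_, hcong, hdec⟩
    intro j
    have h1 : ∑ u : ↥((V j).erase (v0 j)), lamS j u.1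
        = ∑ v ∈ (V j).erase (v0 j), lamS j v :=
      Finset.sum_coe_sort _ _
    have h2 : lamS j (v0 j) + ∑ v ∈ (V j).erase (v0 j), lamS j v = ∑ v ∈ V j, lamS j v :=
      Finset.add_sum_erase _ _ (hv0 j)
    have h3 := hpos j (v0 j) (hv0 j)
    rw [hsum j] at h2
    rw [h1]
    linarith
  -- the candidate representative
  have hz0 : ∃ z0 : Fin d → ℤ, z0 - x ∈ LP ∧
      castH z0 = ∑ j, ((c j : ℝ) • castH (v0 j) + ∑ u, f j u • e ⟨j, u⟩) := by
    refine ⟨x + (∑ j, (c j : ℤ) • v0 j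
      + ∑ i : (Σ j : Fin n, ↥((V j).erase (v0 j))), (-⌊t i⌋) • (i.2.1 - v0 i.1)), ?_, ?_⟩
    · rw [add_sub_cancel_left]
      refine add_mem (AddSubgroup.sum_mem _ fun j _ => AddSubgroup.zsmul_mem _ ?_ _)
        (AddSubgroup.sum_mem _ fun i _ => AddSubgroup.zsmul_mem _ ?_ _)
      · rw [hLP]
        exact AddSubgroup.subset_closure (Set.mem_iUnion.mpr ⟨j, Finset.mem_coe.mpr (hv0 j)⟩)
      · rw [hLP]
        exact sub_mem
          (AddSubgroup.subset_closure (Set.mem_iUnion.mpr ⟨i.1, Finset.mem_coe.mpr (hmemV i.2)⟩))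
          (AddSubgroup.subset_closure (Set.mem_iUnion.mpr ⟨i.1, Finset.mem_coe.mpr (hv0 i.1)⟩))
    · rw [map_add, map_add, map_sum, map_sum, ← ht]
      have e1 : ∀ j : Fin n, castH ((c j : ℤ) • v0 j) = (c j : ℝ) • castH (v0 j) := by
        intro j; rw [castH_zsmul]; push_cast; rfl
      have e2 : ∀ i : (Σ j : Fin n, ↥((V j).erase (v0 j))),
          castH ((-⌊t i⌋) • (i.2.1 - v0 i.1)) = (-(⌊t i⌋:ℝ)) • e i := by
        intro i; rw [castH_zsmul, map_sub]; push_cast; rfl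
      rw [Finset.sum_congr rfl fun j _ => e1 j, Finset.sum_congr rfl fun i _ => e2 i]
      have e3 : ∑ i : (Σ j : Fin n, ↥((V j).erase (v0 j))), t i • e i
          + (∑ j, (c j : ℝ) • castH (v0 j)
            + ∑ i : (Σ j : Fin n, ↥((V j).erase (v0 j))), (-(⌊t i⌋:ℝ)) • e i)
          = ∑ j, (c j : ℝ) • castH (v0 j)
            + ∑ i : (Σ j : Fin n, ↥((V j).erase (v0 j))), Int.fract (t i) • e i := by
        have e4 : ∀ i : (Σ j : Fin n, ↥((V j).erase (v0 j))),
            t i • e i + (-(⌊t i⌋:ℝ)) • e i = Int.fract (t i) • e i := by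
          intro i
          have h5 : t i + -(⌊t i⌋:ℝ) = Int.fract (t i) := by
            have h6 : Int.fract (t i) = t i - ⌊t i⌋ := rfl
            linarith
          rw [← add_smul, h5]
        rw [← Finset.sum_congr rfl fun i _ => e4 i, Finset.sum_add_distrib]
        abel
      rw [e3, Finset.sum_add_distrib]
      congr 1
      rw [← Finset.univ_sigma_univ, Finset.sum_sigma]
  obtain ⟨z0, hz0LP, hz0cast⟩ := hz0
  have hgpt : ∀ j, (c j : ℝ) • castH (v0 j) + ∑ u, f j u • e ⟨j, u⟩
      ∈ (c j : ℝ) • (convexHull ℝ (castH '' (V j : Set (Fin d → ℤ)))) := by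
    intro j
    rw [mem_nsmul_hull_iff (V j) ⟨v0 j, hv0 j⟩]
    have hfnn : ∀ u, 0 ≤ f j u := fun u => Int.fract_nonneg _
    have hcge : ∑ u, f j u ≤ (c j : ℝ) := by
      rw [hc]
      exact Nat.le_ceil _
    refine ⟨fun v => if h : v ∈ (V j).erase (v0 j) then f j ⟨v, h⟩
      else ((c j : ℝ) - ∑ u, f j u), ?_, ?_, ?_⟩
    · intro v hv
      dsimp only
      by_cases h : v ∈ (V j).erase (v0 j)
      · rw [dif_pos h]; exact hfnn _
      · rw [dif_neg h]; linarith
    · have h2 : ∑ v ∈ (V j).erase (v0 j), (if h : v ∈ (V j).erase (v0 j) then f j ⟨v, h⟩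
          else ((c j : ℝ) - ∑ u, f j u)) = ∑ u, f j u := by
        rw [← Finset.sum_coe_sort ((V j).erase (v0 j))]
        exact Finset.sum_congr rfl fun u _ => dif_pos u.2
      have h3 := Finset.add_sum_erase (V j) (fun v => if h : v ∈ (V j).erase (v0 j)
          then f j ⟨v, h⟩ else ((c j : ℝ) - ∑ u, f j u)) (hv0 j)
      rw [h2, dif_neg (Finset.notMem_erase _ _)] at h3
      rw [← h3]
      ring
    · rw [sum_smul_castH_split (V j) (v0 j)]
      have h2 : ∑ v ∈ (V j).erase (v0 j), (if h : v ∈ (V j).erase (v0 j) then f j ⟨v, h⟩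
          else ((c j : ℝ) - ∑ u, f j u)) • (castH v - castH (v0 j))
            = ∑ u, f j u • e ⟨j, u⟩ := by
        rw [← Finset.sum_coe_sort ((V j).erase (v0 j))]
        exact Finset.sum_congr rfl fun u _ => by rw [dif_pos u.2]
      have h3 : ∑ v ∈ V j, (if h : v ∈ (V j).erase (v0 j) then f j ⟨v, h⟩
          else ((c j : ℝ) - ∑ u, f j u)) = (c j : ℝ) := by
        have h4 : ∑ v ∈ (V j).erase (v0 j), (if h : v ∈ (V j).erase (v0 j) then f j ⟨v, h⟩
            else ((c j : ℝ) - ∑ u, f j u)) = ∑ u, f j u := by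
          rw [← Finset.sum_coe_sort ((V j).erase (v0 j))]
          exact Finset.sum_congr rfl fun u _ => dif_pos u.2
        have h5 := Finset.add_sum_erase (V j) (fun v => if h : v ∈ (V j).erase (v0 j)
            then f j ⟨v, h⟩ else ((c j : ℝ) - ∑ u, f j u)) (hv0 j)
        rw [h4, dif_neg (Finset.notMem_erase _ _)] at h5
        rw [← h5]
        ring
      rw [h2, h3]
  have hz0mem : castH z0 ∈ ∑ j, (c j : ℝ) •
      (convexHull ℝ (castH '' (V j : Set (Fin d → ℤ)))) := by
    rw [hz0cast]
    exact Set.mem_fintype_sum _ _ |>.mpr ⟨_, hgpt, rfl⟩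
  -- fract of lam' is f, and lam' dominates f
  have hfract : ∀ (lam : ∀ j : Fin n, ↥((V j).erase (v0 j)) → ℝ),
      (∀ j u, 0 ≤ lam j u) → (∀ j u, ∃ k : ℤ, lam j u = t ⟨j, u⟩ + k) →
      ∀ j u, Int.fract (lam j u) = f j u ∧ f j u ≤ lam j u := by
    intro lam hpos hcong j u
    obtain ⟨k, hk⟩ := hcong j u
    have h1 : Int.fract (lam j u) = f j u := by rw [hk, Int.fract_add_intCast]
    refine ⟨h1, ?_⟩
    rw [← h1]
    have : (0:ℝ) ≤ ⌊lam j u⌋ := by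
      exact_mod_cast Int.floor_nonneg.mpr (hpos j u)
    have h3 : Int.fract (lam j u) = lam j u - ⌊lam j u⌋ := rfl
    linarith
  refine ⟨c, ⟨z0, hz0LP, hz0mem⟩, ?_, ?_, ?_⟩
  · -- minimality
    rintro c' ⟨z', hz'LP, hz'mem⟩ j
    obtain ⟨lam, hpos, hsum, hcong, _⟩ := keyF c' z' hz'LP hz'mem
    rw [hc]
    refine Nat.ceil_le.mpr (le_trans (Finset.sum_le_sum fun u _ => ?_) (hsum j))
    exact (hfract lam hpos hcong j u).2
  · -- bound
    intro j
    have h1 : (c j : ℕ) ≤ ((V j).erase (v0 j)).card := by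
      rw [hc]
      refine Nat.ceil_le.mpr ?_
      calc ∑ u, f j u ≤ ∑ _u : ↥((V j).erase (v0 j)), (1:ℝ) :=
            Finset.sum_le_sum fun u _ => (Int.fract_lt_one _).le
        _ = (((V j).erase (v0 j)).card : ℝ) := by simp [Finset.card_univ]
    rwa [Finset.card_erase_of_mem (hv0 j)] at h1
  · -- uniqueness of the representative
    refine ⟨z0, ⟨hz0LP, hz0mem⟩, ?_⟩
    rintro z' ⟨hz'LP, hz'mem⟩
    obtain ⟨lam, hpos, hsum, hcong, hdec⟩ := keyF c z' hz'LP hz'mem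
    have hlf : ∀ j u, lam j u = f j u := by
      intro j u
      have hfr := fun u => hfract lam hpos hcong j u
      -- the floors are nonnegative integers with sum < 1
      have hfloor : ∀ u, lam j u - f j u = (⌊lam j u⌋ : ℝ) := by
        intro u
        rw [← (hfr u).1]
        have : Int.fract (lam j u) = lam j u - ⌊lam j u⌋ := rfl
        linarith
      have hsum2 : ∑ u, (lam j u - f j u) < 1 := by
        have hceil : (c j : ℝ) < (∑ u, f j u) + 1 := by
          rw [hc]
          exact Nat.ceil_lt_add_one (Finset.sum_nonneg fun u _ => Int.fract_nonneg _)
        have := hsum j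
        rw [Finset.sum_sub_distrib]
        linarith
      have hS : (∑ u, ⌊lam j u⌋) = 0 := by
        have hnn : (0:ℤ) ≤ ∑ u, ⌊lam j u⌋ :=
          Finset.sum_nonneg fun u _ => Int.floor_nonneg.mpr (hpos j u)
        have hlt : ((∑ u, ⌊lam j u⌋ : ℤ) : ℝ) < 1 := by
          push_cast
          calc ∑ u, (⌊lam j u⌋ : ℝ) = ∑ u, (lam j u - f j u) := by
                exact Finset.sum_congr rfl fun u _ => (hfloor u).symm
            _ < 1 := hsum2
        have : (∑ u, ⌊lam j u⌋ : ℤ) < 1 := by exact_mod_cast hlt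
        omega
      have hz : ⌊lam j u⌋ = 0 := by
        have := (Finset.sum_eq_zero_iff_of_nonneg
          (fun u _ => Int.floor_nonneg.mpr (hpos j u))).mp hS u (Finset.mem_univ u)
        exact this
      have := hfloor u
      rw [hz] at this
      push_cast at this
      linarith
    have : castH z' = castH z0 := by
      rw [hdec, hz0cast]
      exact Finset.sum_congr rfl fun j _ => by
        congr 1
        exact Finset.sum_congr rfl fun u _ => by rw [hlf j u]
    exact castH_inj this
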